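/- (Jacobi–Trudi for generalized moments) Let C be a tridiagonal matrix with all superdiagonal entries nonzero, let Z_N = ⟨W|C^N|V⟩, and for a partition λ = (λ_1,...,λ_n) define K_λ = det(Z_{λ_i+2n-i-j})_{i,j=1}^n / det(Z_{2n-i-j})_{i,j=1}^n. Then K_λ = det(K_{(λ_i+j-i, 0,...,0)})_{i,j=1}^n, where the partition (λ_i+j-i, 0,...,0) has exactly n-j zeros after the first part (and K of a sequence with negative first part is 0, K of the empty partition is 1). -/

import Mathlib

noncomputable section
namespace Stmt8

variable {F : Type*} [Field F]

/-- The row vector `⟨W| = (1,0,0,…)`. -/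
def Wrow : ℕ → F := fun i => if i = 0 then 1 else 0

/-- Right multiplication of a row vector `v` by the tridiagonal matrix `C = (c i j)`. -/
def stp (c : ℕ → ℕ → F) (v : ℕ → F) : ℕ → F := fun j =>
  (if j = 0 then 0 else v (j - 1) * c (j - 1) j) + v j * c j j + v (j + 1) * c (j + 1) j

/-- `Z_N = ⟨W| C^N |V⟩`. -/
def Z (c : ℕ → ℕ → F) (N : ℕ) : F := (stp c)^[N] Wrow 0

/-- For a partition `μ = (μ_1,…,μ_m)` (0-indexed here),
`K_μ = det(Z_{μ_i+2m-i-j})_{i,j=1}^m / det(Z_{2m-i-j})_{i,j=1}^m`. -/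
def Kmom (c : ℕ → ℕ → F) (m : ℕ) (μ : Fin m → ℕ) : F :=
  (Matrix.of fun i j : Fin m => Z c (μ i + (2 * m - 2 - (i : ℕ) - (j : ℕ)))).det /
    (Matrix.of fun i j : Fin m => Z c (2 * m - 2 - (i : ℕ) - (j : ℕ))).det

/-- `K` of the one-row-shape `(z, 0, …, 0)` with `r` zeros; it is `0` when `z < 0`. -/
def KH (c : ℕ → ℕ → F) (z : ℤ) (r : ℕ) : F :=
  if 0 ≤ z then Kmom c (r + 1) (fun k => if (k : ℕ) = 0 then z.toNat else 0) else 0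

/-! ### Auxiliary development: orthogonal polynomials from moments. -/

/-- Hankel matrix of moments. -/
def Hmat (W : ℕ → F) (r : ℕ) : Matrix (Fin r) (Fin r) F := .of fun e k => W (e + k)

/-- Coefficients of the monic "orthogonal polynomial" of degree `r` for the moment
sequence `W`. -/
def coef (W : ℕ → F) (r : ℕ) : ℕ → F := fun k =>
  if k = r then 1 else if h : k < r then
    ((Hmat W r)⁻¹.mulVec (fun e : Fin r => -W ((e : ℕ) + r))) ⟨k, h⟩ else 0

lemma coef_self (W : ℕ → F) (r : ℕ) : coef W r r = 1 := by simp [coef]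

lemma coef_gt (W : ℕ → F) {r k : ℕ} (h : r < k) : coef W r k = 0 := by
  simp [coef, Nat.ne_of_gt h, not_lt_of_gt h]

/-- `L(x^e p_r(x))` where `L` is the moment functional and `p_r` the monic orthogonal
polynomial of degree `r`. -/
def LL (W : ℕ → F) (e r : ℕ) : F := ∑ k ∈ Finset.range (r + 1), coef W r k * W (e + k)

/-- The squared norm `L(x^r p_r(x))`. -/
def nrm (W : ℕ → F) (r : ℕ) : F := LL W r r

/-- Orthogonality: `L(x^e p_r) = 0` for `e < r`. -/
lemma orth (W : ℕ → F) {r : ℕ} (hdet : (Hmat W r).det ≠ 0) {e : ℕ} (he : e < r) :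
    LL W e r = 0 := by
  set b : Fin r → F := (Hmat W r)⁻¹.mulVec (fun e : Fin r => -W ((e : ℕ) + r)) with hb
  have hmv : (Hmat W r).mulVec b = fun e : Fin r => -W ((e : ℕ) + r) := by
    rw [hb, Matrix.mulVec_mulVec, Matrix.mul_nonsing_inv _ (isUnit_iff_ne_zero.2 hdet),
      Matrix.one_mulVec]
  have key : ∑ k : Fin r, W (e + k) * b k = -W (e + r) := by
    have := congrFun hmv ⟨e, he⟩
    simpa [Matrix.mulVec, dotProduct, Hmat] using this
  unfold LL
  rw [Finset.sum_range_succ, coef_self, one_mul]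
  have hsum : ∑ k ∈ Finset.range r, coef W r k * W (e + k)
      = ∑ k : Fin r, W (e + k) * b k := by
    rw [← Fin.sum_univ_eq_sum_range]
    refine Finset.sum_congr rfl fun k _ => ?_
    have : coef W r (k : ℕ) = b k := by
      simp [coef, Fin.is_lt k, Nat.ne_of_lt (Fin.is_lt k), hb]
    rw [this, mul_comm]
  rw [hsum, key, neg_add_cancel]

/-- Column operations: replacing powers by orthogonal polynomials does not change the
determinant. -/
lemma det_G_eq_L (W : ℕ → F) (m : ℕ) (g : Fin m → ℕ) :
    (Matrix.of fun i j : Fin m => W (g i + (j : ℕ))).det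
      = (Matrix.of fun i j : Fin m => LL W (g i) (j : ℕ)).det := by
  have hB : (Matrix.of fun k j : Fin m => coef W (j : ℕ) (k : ℕ)).det = 1 := by
    rw [Matrix.det_of_upperTriangular]
    · calc ∏ i : Fin m, coef W (i : ℕ) (i : ℕ) = ∏ i : Fin m, 1 :=
          Finset.prod_congr rfl fun i _ => coef_self W i
      _ = 1 := Finset.prod_const_one
    · intro i j hij
      exact coef_gt W hij
  have hmul : (Matrix.of fun i j : Fin m => LL W (g i) (j : ℕ))
      = (Matrix.of fun i j : Fin m => W (g i + (j : ℕ)))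
        * (Matrix.of fun k j : Fin m => coef W (j : ℕ) (k : ℕ)) := by
    ext i j
    simp only [Matrix.mul_apply, Matrix.of_apply]
    rw [LL]
    have h1 : ∑ x : Fin m, W (g i + (x : ℕ)) * coef W (j : ℕ) (x : ℕ)
        = ∑ k ∈ Finset.range m, W (g i + k) * coef W (j : ℕ) k :=
      Fin.sum_univ_eq_sum_range (fun k => W (g i + k) * coef W (j : ℕ) k) m
    have h2 : ∑ k ∈ Finset.range (j + 1), coef W (j : ℕ) k * W (g i + k)
        = ∑ k ∈ Finset.range m, coef W (j : ℕ) k * W (g i + k) := by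
      refine Finset.sum_subset (Finset.range_subset_range.2 j.is_lt) fun k _ hk => ?_
      rw [coef_gt W (by simpa using hk), zero_mul]
    rw [h2, h1]
    exact Finset.sum_congr rfl fun k _ => mul_comm _ _
  rw [hmul, Matrix.det_mul, hB, mul_one]

/-- Column reversal. -/
lemma det_rev (m : ℕ) (f : Fin m → ℕ → F) :
    (Matrix.of fun i j : Fin m => f i (m - 1 - (j : ℕ))).det
      = ((Equiv.Perm.sign (Fin.revPerm : Equiv.Perm (Fin m)) : ℤ) : F)
        * (Matrix.of fun i j : Fin m => f i (j : ℕ)).det := by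
  have : (Matrix.of fun i j : Fin m => f i (m - 1 - (j : ℕ)))
      = (Matrix.of fun i j : Fin m => f i (j : ℕ)).submatrix id Fin.revPerm := by
    ext i j
    simp only [Matrix.submatrix_apply, Matrix.of_apply, id_eq, Fin.revPerm_apply, Fin.val_rev]
    congr 1
    omega
  rw [this, Matrix.det_permute']

lemma detN_eq_detM (W : ℕ → F) (m : ℕ) (g : Fin m → ℕ) :
    (Matrix.of fun i j : Fin m => W (g i + (m - 1 - (j : ℕ)))).det
      = (Matrix.of fun i j : Fin m => LL W (g i) (m - 1 - (j : ℕ))).det := by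
  rw [det_rev m (fun i t => W (g i + t)), det_rev m (fun i t => LL W (g i) t),
    det_G_eq_L]

lemma hankel_det (W : ℕ → F) (m : ℕ) :
    (Matrix.of fun i j : Fin m => W (2 * m - 2 - (i : ℕ) - (j : ℕ))).det
      = (Hmat W m).det := by
  have : (Matrix.of fun i j : Fin m => W (2 * m - 2 - (i : ℕ) - (j : ℕ)))
      = (Hmat W m).submatrix Fin.revPerm Fin.revPerm := by
    ext i j
    simp only [Matrix.submatrix_apply, Matrix.of_apply, Fin.revPerm_apply, Fin.val_rev, Hmat]
    congr 1
    omega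
  rw [this, Matrix.det_submatrix_equiv_self]

lemma det_tri (W : ℕ → F) (hd : ∀ r, (Hmat W r).det ≠ 0) (m : ℕ) :
    (Matrix.of fun i j : Fin m => LL W (m - 1 - (i : ℕ)) (m - 1 - (j : ℕ))).det
      = ∏ i : Fin m, nrm W (m - 1 - (i : ℕ)) := by
  rw [Matrix.det_of_upperTriangular]
  · exact Finset.prod_congr rfl fun i _ => rfl
  · intro i j hij
    have hi := i.is_lt
    have hj := j.is_lt
    simp only [id_eq] at hij
    exact orth W (hd _) (by omega)

lemma nrm_ne_zero (W : ℕ → F)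
    (hden : ∀ m : ℕ,
      (Matrix.of fun i j : Fin m => W (2 * m - 2 - (i : ℕ) - (j : ℕ))).det ≠ 0)
    (r : ℕ) : nrm W r ≠ 0 := by
  have hd : ∀ m, (Hmat W m).det ≠ 0 := fun m => (hankel_det W m) ▸ hden m
  have h1 := hden (r + 1)
  have h2 : (Matrix.of fun i j : Fin (r + 1) => W (2 * (r + 1) - 2 - (i : ℕ) - (j : ℕ)))
      = (Matrix.of fun i j : Fin (r + 1) =>
          W ((fun i : Fin (r + 1) => (r + 1) - 1 - (i : ℕ)) i + ((r + 1) - 1 - (j : ℕ)))) := by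
    ext i j
    have hi := i.is_lt
    have hj := j.is_lt
    simp only [Matrix.of_apply]
    congr 1
    omega
  rw [h2, detN_eq_detM W (r + 1) (fun i => (r + 1) - 1 - (i : ℕ))] at h1
  have h3 : (Matrix.of fun i j : Fin (r + 1) =>
      LL W ((r + 1) - 1 - (i : ℕ)) ((r + 1) - 1 - (j : ℕ))).det
      = ∏ i : Fin (r + 1), nrm W ((r + 1) - 1 - (i : ℕ)) := det_tri W hd (r + 1)
  rw [h3] at h1
  have h4 := Finset.prod_ne_zero_iff.1 h1 (0 : Fin (r + 1)) (Finset.mem_univ _)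
  simpa using h4

lemma hd_of_hden (W : ℕ → F)
    (hden : ∀ m : ℕ,
      (Matrix.of fun i j : Fin m => W (2 * m - 2 - (i : ℕ) - (j : ℕ))).det ≠ 0) :
    ∀ m, (Hmat W m).det ≠ 0 := fun m => (hankel_det W m) ▸ hden m

/-- The general determinant formula for `Kmom`. -/
lemma Kmom_formula (c : ℕ → ℕ → F) (hd : ∀ m, (Hmat (Z c) m).det ≠ 0) (m : ℕ)
    (μ : Fin m → ℕ) :
    Kmom c m μ =
      (Matrix.of fun i j : Fin m =>
          LL (Z c) (μ i + (m - 1 - (i : ℕ))) (m - 1 - (j : ℕ))).det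
        / ∏ i : Fin m, nrm (Z c) (m - 1 - (i : ℕ)) := by
  unfold Kmom
  have hnum : (Matrix.of fun i j : Fin m => Z c (μ i + (2 * m - 2 - (i : ℕ) - (j : ℕ))))
      = (Matrix.of fun i j : Fin m =>
          Z c ((fun i : Fin m => μ i + (m - 1 - (i : ℕ))) i + (m - 1 - (j : ℕ)))) := by
    ext i j
    have hi := i.is_lt
    have hj := j.is_lt
    simp only [Matrix.of_apply]
    congr 1
    omega
  have hden' : (Matrix.of fun i j : Fin m => Z c (2 * m - 2 - (i : ℕ) - (j : ℕ)))
      = (Matrix.of fun i j : Fin m =>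
          Z c ((fun i : Fin m => m - 1 - (i : ℕ)) i + (m - 1 - (j : ℕ)))) := by
    ext i j
    have hi := i.is_lt
    have hj := j.is_lt
    simp only [Matrix.of_apply]
    congr 1
    omega
  rw [hnum, hden', detN_eq_detM (Z c) m (fun i => μ i + (m - 1 - (i : ℕ))),
    detN_eq_detM (Z c) m (fun i => m - 1 - (i : ℕ)), det_tri (Z c) hd m]

/-- One-row shapes: `K_{(z,0,…,0)} = L(x^{z+r} p_r)/L(x^r p_r)`. -/
lemma KH_formula (c : ℕ → ℕ → F)
    (hden : ∀ m : ℕ,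
      (Matrix.of fun i j : Fin m => Z c (2 * m - 2 - (i : ℕ) - (j : ℕ))).det ≠ 0)
    {z : ℤ} (hz : 0 ≤ z) (r : ℕ) :
    KH c z r = LL (Z c) (z.toNat + r) r / nrm (Z c) r := by
  have hd := hd_of_hden (Z c) hden
  have hn := nrm_ne_zero (Z c) hden
  unfold KH
  rw [if_pos hz, Kmom_formula c hd (r + 1) _]
  set g : Fin (r + 1) → ℕ :=
    fun i => (if (i : ℕ) = 0 then z.toNat else 0) + ((r + 1) - 1 - (i : ℕ)) with hgdef
  have htri : (Matrix.of fun i j : Fin (r + 1) =>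
      LL (Z c) (g i) ((r + 1) - 1 - (j : ℕ))).det
      = ∏ i : Fin (r + 1), LL (Z c) (g i) ((r + 1) - 1 - (i : ℕ)) := by
    rw [Matrix.det_of_upperTriangular]
    · exact Finset.prod_congr rfl fun i _ => rfl
    · intro i j hij
      have hi := i.is_lt
      have hj := j.is_lt
      simp only [id_eq] at hij
      have hii : (i : ℕ) ≠ 0 := by omega
      refine orth (Z c) (hd _) ?_
      simp only [hgdef, if_neg hii, zero_add]
      omega
  rw [htri, Fin.prod_univ_succ, Fin.prod_univ_succ
    (fun i : Fin (r + 1) => nrm (Z c) ((r + 1) - 1 - (i : ℕ)))]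
  have hg0 : LL (Z c) (g 0) ((r + 1) - 1 - ((0 : Fin (r + 1)) : ℕ)) = LL (Z c) (z.toNat + r) r := by
    simp [hgdef]
  have hrest : ∀ i : Fin r,
      LL (Z c) (g i.succ) ((r + 1) - 1 - ((i.succ : Fin (r + 1)) : ℕ))
        = nrm (Z c) ((r + 1) - 1 - ((i.succ : Fin (r + 1)) : ℕ)) := by
    intro i
    simp [hgdef, nrm]
  have hprodeq : ∏ i : Fin r, LL (Z c) (g i.succ) ((r + 1) - 1 - ((i.succ : Fin (r + 1)) : ℕ))
      = ∏ i : Fin r, nrm (Z c) ((r + 1) - 1 - ((i.succ : Fin (r + 1)) : ℕ)) :=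
    Finset.prod_congr rfl fun i _ => hrest i
  rw [hg0, hprodeq]
  have hn0 : nrm (Z c) ((r + 1) - 1 - ((0 : Fin (r + 1)) : ℕ)) = nrm (Z c) r := by simp
  rw [hn0]
  have hP : (∏ i : Fin r, nrm (Z c) ((r + 1) - 1 - ((i.succ : Fin (r + 1)) : ℕ))) ≠ 0 :=
    Finset.prod_ne_zero_iff.2 fun i _ => hn _
  rw [mul_div_mul_right _ _ hP]

/-- Jacobi–Trudi formula: `K_λ = det(K_{(λ_i+j-i, 0,…,0)})_{i,j=1}^n`, the partition
`(λ_i+j-i, 0,…,0)` having exactly `n-j` zeros after the first part. -/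
theorem stmt8 (c : ℕ → ℕ → F)
    (htri : ∀ i j : ℕ, 1 < ((i : ℤ) - (j : ℤ)).natAbs → c i j = 0)
    (hsup : ∀ i : ℕ, c i (i + 1) ≠ 0)
    (hden : ∀ m : ℕ,
      (Matrix.of fun i j : Fin m => Z c (2 * m - 2 - (i : ℕ) - (j : ℕ))).det ≠ 0)
    (n : ℕ) (lam : Fin n → ℕ) (hlam : Antitone lam) :
    Kmom c n lam =
      (Matrix.of fun i j : Fin n =>
        KH c ((lam i : ℤ) + (j : ℕ) - (i : ℕ)) (n - 1 - (j : ℕ))).det := by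
  have hd := hd_of_hden (Z c) hden
  have hn := nrm_ne_zero (Z c) hden
  rw [Kmom_formula c hd n lam]
  have hentry : (Matrix.of fun i j : Fin n =>
        KH c ((lam i : ℤ) + (j : ℕ) - (i : ℕ)) (n - 1 - (j : ℕ)))
      = Matrix.of fun i j : Fin n =>
          (fun j : Fin n => (nrm (Z c) (n - 1 - (j : ℕ)))⁻¹) j *
          (Matrix.of fun i j : Fin n =>
            LL (Z c) (lam i + (n - 1 - (i : ℕ))) (n - 1 - (j : ℕ))) i j := by
    ext i j
    have hi := i.is_lt
    have hj := j.is_lt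
    simp only [Matrix.of_apply]
    by_cases hz : 0 ≤ (lam i : ℤ) + (j : ℕ) - (i : ℕ)
    · rw [KH_formula c hden hz]
      have harg : ((lam i : ℤ) + (j : ℕ) - (i : ℕ)).toNat + (n - 1 - (j : ℕ))
          = lam i + (n - 1 - (i : ℕ)) := by omega
      rw [harg, div_eq_inv_mul]
    · rw [KH, if_neg hz, orth (Z c) (hd _) (e := lam i + (n - 1 - (i : ℕ))) (by omega),
        mul_zero]
  rw [hentry, Matrix.det_mul_row]
  rw [Finset.prod_inv_distrib, div_eq_mul_inv, mul_comm]

end Stmt8
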